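/- arXiv:2110.12468 — 3 statements merged into one kernel-verified Lean document; each statement's English description precedes it below -/
import Mathlib

section
/- Under linear parameterization π_φ ∝ exp(ψ(s,a)ᵀφ) and Q_k(s,a) = θ_k(s)ᵀa, the stationary point φ_{k+1} of the OPO objective L(φ) = E_s[⟨Q_k(s,·) − λ_k log(π_φ(·|s)/π_0(·|s)), π_φ(·|s)⟩ − η_k KL(π_φ(·|s)‖π_k(·|s))] satisfies φ_{k+1} = (η_k φ_k + λ_k φ_0)/(η_k + λ_k) + (η_k+λ_k)^{-1} I_{φ_{k+1}}^{-1} E_s[∇_a Q_k(s, Π_{φ_{k+1}}(s)) ∇_φ Π_{φ_{k+1}}(s)], where Π_φ(s) = E_{a∼π_φ(·|s)}[a]. -/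
open Finset RealInnerProductSpace

/-- Energy-based (softmax) policy at a fixed state: π_φ(a) ∝ exp(ψ(a)ᵀφ). -/
noncomputable def pol {A : Type*} [Fintype A] {d : ℕ}
    (ψ : A → EuclideanSpace ℝ (Fin d)) (φ : EuclideanSpace ℝ (Fin d)) (a : A) : ℝ :=
  Real.exp (⟪ψ a, φ⟫ - Real.log (∑ b, Real.exp ⟪ψ b, φ⟫))

/-- Mean feature E_{a∼π_φ}[ψ(a)]. -/
noncomputable def meanFeat {A : Type*} [Fintype A] {d : ℕ}
    (ψ : A → EuclideanSpace ℝ (Fin d)) (φ : EuclideanSpace ℝ (Fin d)) :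
    EuclideanSpace ℝ (Fin d) :=
  ∑ a, pol ψ φ a • ψ a

/-- The per-state covariance Var_{a∼π_φ}[ψ(a)] applied to a vector w. -/
noncomputable def covApply {A : Type*} [Fintype A] {d : ℕ}
    (ψ : A → EuclideanSpace ℝ (Fin d)) (φ w : EuclideanSpace ℝ (Fin d)) :
    EuclideanSpace ℝ (Fin d) :=
  ∑ a, (pol ψ φ a * ⟪ψ a - meanFeat ψ φ, w⟫) • (ψ a - meanFeat ψ φ)

/-- The deterministic policy Π_φ(s) = E_{a∼π_φ(·|s)}[a] (actions embedded in ℝ^m). -/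
noncomputable def detPol {S A : Type*} [Fintype A] {d m : ℕ}
    (ψ : S → A → EuclideanSpace ℝ (Fin d)) (act : A → EuclideanSpace ℝ (Fin m))
    (φ : EuclideanSpace ℝ (Fin d)) (s : S) : EuclideanSpace ℝ (Fin m) :=
  ∑ a, pol (ψ s) φ a • act a

section aux
variable {A : Type*} [Fintype A] [Nonempty A] {d : ℕ}
  (ψ : A → EuclideanSpace ℝ (Fin d)) (φ x : EuclideanSpace ℝ (Fin d))

noncomputable def ell (ψ : A → EuclideanSpace ℝ (Fin d)) (φ : EuclideanSpace ℝ (Fin d)) (a : A) : ℝ :=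
  ⟪ψ a, φ⟫ - Real.log (∑ b, Real.exp ⟪ψ b, φ⟫)

lemma pol_eq_exp_ell (a : A) : pol ψ φ a = Real.exp (ell ψ φ a) := rfl

lemma Zpos : 0 < ∑ b, Real.exp ⟪ψ b, φ⟫ :=
  Finset.sum_pos (fun b _ => Real.exp_pos _) Finset.univ_nonempty

lemma pol_eq_div (a : A) : pol ψ φ a = Real.exp ⟪ψ a, φ⟫ / (∑ b, Real.exp ⟪ψ b, φ⟫) := by
  rw [pol, Real.exp_sub, Real.exp_log (Zpos ψ φ)]

lemma sum_pol : ∑ a, pol ψ φ a = 1 := by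
  simp only [pol_eq_div]
  rw [← Finset.sum_div, div_self (ne_of_gt (Zpos ψ φ))]

lemma sum_pol_smul_sub : ∑ a, pol ψ φ a • (ψ a - meanFeat ψ φ) = 0 := by
  simp only [smul_sub, Finset.sum_sub_distrib, ← Finset.sum_smul, sum_pol, one_smul, meanFeat,
    sub_self]

lemma hasFDerivAt_ell (a : A) :
    HasFDerivAt (fun φ => ell ψ φ a) (innerSL ℝ (ψ a - meanFeat ψ x)) x := by
  have h1 : ∀ b : A, HasFDerivAt (fun φ : EuclideanSpace ℝ (Fin d) => ⟪ψ b, φ⟫)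
      (innerSL ℝ (ψ b)) x := fun b => (innerSL ℝ (ψ b)).hasFDerivAt
  have hZ : HasFDerivAt (fun φ : EuclideanSpace ℝ (Fin d) => ∑ b, Real.exp ⟪ψ b, φ⟫)
      (∑ b, Real.exp ⟪ψ b, x⟫ • innerSL ℝ (ψ b)) x :=
    HasFDerivAt.fun_sum fun b _ => (h1 b).exp
  have hlog := hZ.log (ne_of_gt (Zpos ψ x))
  have := (h1 a).sub hlog
  refine this.congr_fderiv ?_
  symm
  rw [map_sub]
  congr 1
  rw [meanFeat, map_sum, Finset.smul_sum]
  refine Finset.sum_congr rfl fun b _ => ?_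
  rw [map_smul, smul_smul, pol_eq_div, div_eq_inv_mul]

end aux

section core
variable {A : Type*} [Fintype A] [Nonempty A] {d : ℕ}
  (ψ : A → EuclideanSpace ℝ (Fin d)) (x : EuclideanSpace ℝ (Fin d))

lemma core_hasGradientAt (r : A → ℝ) (β : ℝ) :
    HasGradientAt (fun φ => ∑ a, Real.exp (ell ψ φ a) * (r a - β * ell ψ φ a))
      (∑ a, (pol ψ x a * (r a - β * ell ψ x a)) • (ψ a - meanFeat ψ x)) x := by
  rw [hasGradientAt_iff_hasFDerivAt]
  have hraw : HasFDerivAt (fun φ => ∑ a, Real.exp (ell ψ φ a) * (r a - β * ell ψ φ a))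
      (∑ a, (Real.exp (ell ψ x a) • (-(β • innerSL ℝ (ψ a - meanFeat ψ x))) +
        (r a - β * ell ψ x a) • (Real.exp (ell ψ x a) • innerSL ℝ (ψ a - meanFeat ψ x)))) x := by
    refine HasFDerivAt.fun_sum fun a _ => ?_
    exact ((hasFDerivAt_ell ψ x a).exp).mul
      (((hasFDerivAt_ell ψ x a).const_mul β).const_sub (r a))
  refine hraw.congr_fderiv ?_
  symm
  ext v
  have hz : ∑ a, pol ψ x a * ⟪ψ a - meanFeat ψ x, v⟫ = 0 := by
    have := congrArg (fun u : EuclideanSpace ℝ (Fin d) => ⟪u, v⟫) (sum_pol_smul_sub ψ x)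
    simp only [sum_inner, real_inner_smul_left, inner_zero_left] at this
    exact this
  simp only [InnerProductSpace.toDual_apply_apply, ContinuousLinearMap.sum_apply,
    ContinuousLinearMap.add_apply, ContinuousLinearMap.smul_apply,
    ContinuousLinearMap.neg_apply, innerSL_apply_apply, sum_inner, real_inner_smul_left, smul_eq_mul]
  rw [← sub_eq_zero, ← Finset.sum_sub_distrib]
  have key : ∀ a : A, pol ψ x a * (r a - β * ell ψ x a) * ⟪ψ a - meanFeat ψ x, v⟫ -
      (Real.exp (ell ψ x a) * -(β * ⟪ψ a - meanFeat ψ x, v⟫) +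
        (r a - β * ell ψ x a) * (Real.exp (ell ψ x a) * ⟪ψ a - meanFeat ψ x, v⟫)) =
      β * (pol ψ x a * ⟪ψ a - meanFeat ψ x, v⟫) := by
    intro a
    rw [pol_eq_exp_ell]
    ring
  simp_rw [key]
  rw [← Finset.mul_sum, hz, mul_zero]
end core

section alg
variable {A : Type*} [Fintype A] [Nonempty A] {d : ℕ}
  (ψ : A → EuclideanSpace ℝ (Fin d)) (x : EuclideanSpace ℝ (Fin d))

lemma log_pol_div (φ φ' : EuclideanSpace ℝ (Fin d)) (a : A) :
    Real.log (pol ψ φ a / pol ψ φ' a) = ell ψ φ a - ell ψ φ' a := by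
  rw [pol_eq_exp_ell, pol_eq_exp_ell, ← Real.exp_sub, Real.log_exp]

lemma obj_rewrite (c : A → ℝ) (φ0 φk : EuclideanSpace ℝ (Fin d)) (lam η : ℝ)
    (φ : EuclideanSpace ℝ (Fin d)) :
    ((∑ a, pol ψ φ a * (c a - lam * Real.log (pol ψ φ a / pol ψ φ0 a))) -
      η * ∑ a, pol ψ φ a * Real.log (pol ψ φ a / pol ψ φk a)) =
    ∑ a, Real.exp (ell ψ φ a) *
      ((c a + lam * ell ψ φ0 a + η * ell ψ φk a) - (lam + η) * ell ψ φ a) := by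
  rw [Finset.mul_sum, ← Finset.sum_sub_distrib]
  refine Finset.sum_congr rfl fun a _ => ?_
  rw [log_pol_div, log_pol_div, pol_eq_exp_ell]; ring

lemma shift_sum (t : A → ℝ) (C : ℝ) :
    ∑ a, (pol ψ x a * (t a - C)) • (ψ a - meanFeat ψ x) =
    ∑ a, (pol ψ x a * t a) • (ψ a - meanFeat ψ x) := by
  rw [← sub_eq_zero, ← Finset.sum_sub_distrib]
  have h : ∀ a : A, (pol ψ x a * (t a - C)) • (ψ a - meanFeat ψ x) -
      (pol ψ x a * t a) • (ψ a - meanFeat ψ x) =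
      (-C) • (pol ψ x a • (ψ a - meanFeat ψ x)) := by
    intro a
    rw [← sub_smul, smul_smul]
    congr 1; ring
  simp_rw [h]
  rw [← Finset.smul_sum, sum_pol_smul_sub, smul_zero]

lemma cov_eq (φ' : EuclideanSpace ℝ (Fin d)) :
    ∑ a, (pol ψ x a * (ell ψ x a - ell ψ φ' a)) • (ψ a - meanFeat ψ x) =
    covApply ψ x (x - φ') := by
  have h1 : ∀ a : A, ell ψ x a - ell ψ φ' a = ⟪ψ a, x - φ'⟫ -
      (Real.log (∑ b, Real.exp ⟪ψ b, x⟫) - Real.log (∑ b, Real.exp ⟪ψ b, φ'⟫)) := by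
    intro a; simp only [ell, inner_sub_right]; ring
  have h2 : ∀ a : A, ⟪ψ a - meanFeat ψ x, x - φ'⟫ =
      ⟪ψ a, x - φ'⟫ - ⟪meanFeat ψ x, x - φ'⟫ := fun a => inner_sub_left _ _ _
  simp_rw [covApply, h1, h2, shift_sum]

lemma covApply_comb (lam η : ℝ) (u v : EuclideanSpace ℝ (Fin d)) :
    lam • covApply ψ x u + η • covApply ψ x v = covApply ψ x (lam • u + η • v) := by
  simp only [covApply, Finset.smul_sum, smul_smul, inner_add_right, real_inner_smul_right]
  rw [← Finset.sum_add_distrib]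
  refine Finset.sum_congr rfl fun a _ => ?_
  rw [← add_smul]
  congr 1; ring

lemma gfull_decomp (c : A → ℝ) (φ0 φk : EuclideanSpace ℝ (Fin d)) (lam η : ℝ) :
    ∑ a, (pol ψ x a * ((c a + lam * ell ψ φ0 a + η * ell ψ φk a) - (lam + η) * ell ψ x a)) •
        (ψ a - meanFeat ψ x) =
    (∑ a, (pol ψ x a * c a) • (ψ a - meanFeat ψ x)) -
      covApply ψ x (lam • (x - φ0) + η • (x - φk)) := by
  have hsplit : ∀ a : A,
      (pol ψ x a * ((c a + lam * ell ψ φ0 a + η * ell ψ φk a) - (lam + η) * ell ψ x a)) •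
        (ψ a - meanFeat ψ x) =
      (pol ψ x a * c a) • (ψ a - meanFeat ψ x) -
        (lam • ((pol ψ x a * (ell ψ x a - ell ψ φ0 a)) • (ψ a - meanFeat ψ x)) +
          η • ((pol ψ x a * (ell ψ x a - ell ψ φk a)) • (ψ a - meanFeat ψ x))) := by
    intro a
    rw [smul_smul, smul_smul, ← add_smul, ← sub_smul]
    congr 1; ring
  simp_rw [hsplit]
  rw [Finset.sum_sub_distrib, Finset.sum_add_distrib, ← Finset.smul_sum, ← Finset.smul_sum,
    cov_eq, cov_eq, covApply_comb]
end alg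

lemma hasGradientAt_weighted_sum {S : Type*} [Fintype S] {d : ℕ} (w : S → ℝ)
    (F : S → EuclideanSpace ℝ (Fin d) → ℝ) (g : S → EuclideanSpace ℝ (Fin d))
    (x : EuclideanSpace ℝ (Fin d)) (h : ∀ s, HasGradientAt (F s) (g s) x) :
    HasGradientAt (fun φ => ∑ s, w s * F s φ) (∑ s, w s • g s) x := by
  rw [hasGradientAt_iff_hasFDerivAt]
  have hraw := HasFDerivAt.fun_sum (fun s (_ : s ∈ Finset.univ) => ((h s).hasFDerivAt.const_mul (w s)))
  refine hraw.congr_fderiv ?_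
  symm
  ext v
  simp only [InnerProductSpace.toDual_apply_apply, ContinuousLinearMap.sum_apply,
    ContinuousLinearMap.smul_apply, sum_inner, real_inner_smul_left, smul_eq_mul]


/-- Under linear parameterization π_φ ∝ exp(ψ(s,a)ᵀφ) and
Q_k(s,a) = θ_k(s)ᵀa, the stationary point φ_{k+1} of the OPO objective
L(φ) = E_s[⟨Q_k(s,·) − λ_k log(π_φ(·|s)/π_0(·|s)), π_φ(·|s)⟩ − η_k KL(π_φ(·|s)‖π_k(·|s))]
satisfies φ_{k+1} = (η_k φ_k + λ_k φ_0)/(η_k + λ_k)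
  + (η_k+λ_k)⁻¹ I_{φ_{k+1}}⁻¹ E_s[∇_a Q_k(s, Π_{φ_{k+1}}(s)) ∇_φ Π_{φ_{k+1}}(s)],
where the last expectation equals the gradient in φ of E_s[Q_k(s, Π_φ(s))] at φ_{k+1},
since Q_k(s, Π_φ(s)) = ⟪θ_k(s), Π_φ(s)⟫. States s are drawn from the dataset
distribution D, modeled by weights w on a finite state space. -/
theorem stmt_2 {S A : Type*} [Fintype S] [Fintype A] [Nonempty A] {d m : ℕ}
    (ψ : S → A → EuclideanSpace ℝ (Fin d)) (act : A → EuclideanSpace ℝ (Fin m))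
    (θ : S → EuclideanSpace ℝ (Fin m))
    (w : S → ℝ) (hw : (∀ s, 0 ≤ w s) ∧ ∑ s, w s = 1)
    (lam η : ℝ) (hlam : 0 < lam) (hη : 0 < η)
    (φ0 φk φk1 : EuclideanSpace ℝ (Fin d))
    -- φ_{k+1} is a stationary point of the OPO objective:
    (hstat : gradient (fun φ => ∑ s, w s *
        ((∑ a, pol (ψ s) φ a *
            (⟪θ s, act a⟫ - lam * Real.log (pol (ψ s) φ a / pol (ψ s) φ0 a))) -
          η * ∑ a, pol (ψ s) φ a * Real.log (pol (ψ s) φ a / pol (ψ s) φk a))) φk1 = 0)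
    -- I_{φ_{k+1}} = E_{s∼D}[Var_{a∼π_{φ_{k+1}}}[ψ(s,a)]] is invertible, with inverse Iinv:
    (Iinv : EuclideanSpace ℝ (Fin d) → EuclideanSpace ℝ (Fin d))
    (hIinv : ∀ v, (∑ s, w s • covApply (ψ s) φk1 (Iinv v)) = v ∧
      Iinv (∑ s, w s • covApply (ψ s) φk1 v) = v) :
    φk1 = (η + lam)⁻¹ • (η • φk + lam • φ0) +
      (η + lam)⁻¹ •
        Iinv (gradient (fun φ => ∑ s, w s * ⟪θ s, detPol ψ act φ s⟫) φk1) := by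
  set q : S → EuclideanSpace ℝ (Fin d) :=
    fun s => ∑ a, (pol (ψ s) φk1 a * ⟪θ s, act a⟫) • (ψ s a - meanFeat (ψ s) φk1) with hq
  set combo : EuclideanSpace ℝ (Fin d) := lam • (φk1 - φ0) + η • (φk1 - φk) with hcombo
  -- gradient of the objective
  have hobj : (fun φ => ∑ s, w s *
      ((∑ a, pol (ψ s) φ a *
          (⟪θ s, act a⟫ - lam * Real.log (pol (ψ s) φ a / pol (ψ s) φ0 a))) -
        η * ∑ a, pol (ψ s) φ a * Real.log (pol (ψ s) φ a / pol (ψ s) φk a))) =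
      fun φ => ∑ s, w s * ∑ a, Real.exp (ell (ψ s) φ a) *
        ((⟪θ s, act a⟫ + lam * ell (ψ s) φ0 a + η * ell (ψ s) φk a) -
          (lam + η) * ell (ψ s) φ a) := by
    funext φ
    exact Finset.sum_congr rfl fun s _ => by rw [obj_rewrite]
  rw [hobj] at hstat
  have hG1 := hasGradientAt_weighted_sum w _
    (fun s => ∑ a, (pol (ψ s) φk1 a *
      ((⟪θ s, act a⟫ + lam * ell (ψ s) φ0 a + η * ell (ψ s) φk a) -
        (lam + η) * ell (ψ s) φk1 a)) • (ψ s a - meanFeat (ψ s) φk1)) φk1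
    (fun s => core_hasGradientAt (ψ s) φk1 _ (lam + η))
  have hG1' : gradient (fun φ => ∑ s, w s * ∑ a, Real.exp (ell (ψ s) φ a) *
        ((⟪θ s, act a⟫ + lam * ell (ψ s) φ0 a + η * ell (ψ s) φk a) -
          (lam + η) * ell (ψ s) φ a)) φk1 =
      ∑ s, w s • (∑ a, (pol (ψ s) φk1 a *
        ((⟪θ s, act a⟫ + lam * ell (ψ s) φ0 a + η * ell (ψ s) φk a) -
          (lam + η) * ell (ψ s) φk1 a)) • (ψ s a - meanFeat (ψ s) φk1)) := hG1.gradient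
  have hzero : (∑ s, w s • (q s - covApply (ψ s) φk1 combo)) = 0 := by
    rw [← hstat, hG1']
    exact (Finset.sum_congr rfl fun s _ => by rw [gfull_decomp]).symm
  have hQeq : (∑ s, w s • q s) = ∑ s, w s • covApply (ψ s) φk1 combo := by
    have := hzero
    simp only [smul_sub, Finset.sum_sub_distrib, sub_eq_zero] at this
    exact this
  -- gradient of the Q-term
  have hQfun : (fun φ => ∑ s, w s * ⟪θ s, detPol ψ act φ s⟫) =
      fun φ => ∑ s, w s * ∑ a, Real.exp (ell (ψ s) φ a) *
        (⟪θ s, act a⟫ - (0 : ℝ) * ell (ψ s) φ a) := by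
    funext φ
    refine Finset.sum_congr rfl fun s _ => ?_
    congr 1
    rw [detPol, inner_sum]
    refine Finset.sum_congr rfl fun a _ => ?_
    rw [real_inner_smul_right, pol_eq_exp_ell]; ring
  have hG2 := hasGradientAt_weighted_sum w _
    (fun s => ∑ a, (pol (ψ s) φk1 a * (⟪θ s, act a⟫ - (0 : ℝ) * ell (ψ s) φk1 a)) •
      (ψ s a - meanFeat (ψ s) φk1)) φk1
    (fun s => core_hasGradientAt (ψ s) φk1 _ 0)
  have hG2' : gradient (fun φ => ∑ s, w s * ∑ a, Real.exp (ell (ψ s) φ a) *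
        (⟪θ s, act a⟫ - (0 : ℝ) * ell (ψ s) φ a)) φk1 =
      ∑ s, w s • (∑ a, (pol (ψ s) φk1 a * (⟪θ s, act a⟫ - (0 : ℝ) * ell (ψ s) φk1 a)) •
        (ψ s a - meanFeat (ψ s) φk1)) := hG2.gradient
  have hQgrad : gradient (fun φ => ∑ s, w s * ⟪θ s, detPol ψ act φ s⟫) φk1 = ∑ s, w s • q s := by
    rw [hQfun, hG2']
    simp only [zero_mul, sub_zero, hq]
  rw [hQgrad, hQeq, (hIinv combo).2, hcombo]
  have hne : η + lam ≠ 0 := by positivity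
  have key : (η + lam) • φk1 =
      (η • φk + lam • φ0) + (lam • (φk1 - φ0) + η • (φk1 - φk)) := by module
  calc φk1 = (η + lam)⁻¹ • ((η + lam) • φk1) := (inv_smul_smul₀ hne _).symm
  _ = _ := by rw [key, smul_add]
end

section
/- If ‖Q_k‖_∞ ≤ (1−γ)^{-1}, λ_k ≥ 0, and f : A → ℝ satisfies the policy-improvement identity via the update π_{k+1} ∝ π_k^{η_k/(η_k+λ_k)} π_0^{λ_k/(η_k+λ_k)} exp(Q_k/(η_k+λ_k)), and ‖λ_k log(π_k/π_0) (up to constants in a)‖_∞ ≤ λ_k α⁴(1−α)^{-4}(1−γ)^{-1}, then (η_k+λ_k)^{-1}⟨Q_k(s,·) − λ_k log(π_k(·|s)/π_0(·|s)), π*(·|s) − π_k(·|s)⟩ ≤ KL(π*(·|s)‖π_k(·|s)) − KL(π*(·|s)‖π_{k+1}(·|s)) + (η_k+λ_k)^{-2}(1 + λ_k α⁴(1−α)^{-4})²(1−γ)^{-2}. -/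
open Finset

/-- KL divergence between two distributions on a finite action space. -/
noncomputable def klPol {A : Type*} [Fintype A] (p q : A → ℝ) : ℝ :=
  ∑ a, p a * Real.log (p a / q a)



lemma auxF_mono : MonotoneOn (fun x : ℝ => (x+1)*Real.log x - 2*(x-1)) (Set.Ioi 0) := by
  have hd : ∀ x ∈ Set.Ioi (0:ℝ), HasDerivAt (fun x : ℝ => (x+1)*Real.log x - 2*(x-1))
      (1 * Real.log x + (x+1) * x⁻¹ - 2*1) x := fun x hx =>
    (((hasDerivAt_id x).add_const 1).mul (Real.hasDerivAt_log (ne_of_gt hx))).sub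
      (((hasDerivAt_id x).sub_const 1).const_mul 2)
  apply monotoneOn_of_deriv_nonneg (convex_Ioi 0)
  · exact fun x hx => ((hd x hx).continuousAt).continuousWithinAt
  · intro x hx
    rw [interior_Ioi] at hx
    exact ((hd x hx).differentiableAt).differentiableWithinAt
  · intro x hx
    rw [interior_Ioi] at hx
    rw [(hd x hx).deriv]
    have hx' : (0:ℝ) < x := hx
    have h2 : (x+1) * x⁻¹ = 1 + x⁻¹ := by field_simp
    nlinarith [Real.one_sub_inv_le_log_of_pos hx']

lemma auxF_nonneg {x : ℝ} (hx : 1 ≤ x) : 0 ≤ (x+1)*Real.log x - 2*(x-1) := by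
  have := auxF_mono (Set.mem_Ioi.2 one_pos) (Set.mem_Ioi.2 (lt_of_lt_of_le one_pos hx)) hx
  simpa using this

lemma auxF_nonpos {x : ℝ} (hx0 : 0 < x) (hx : x ≤ 1) : (x+1)*Real.log x - 2*(x-1) ≤ 0 := by
  have := auxF_mono (Set.mem_Ioi.2 hx0) (Set.mem_Ioi.2 one_pos) hx
  simpa using this

lemma auxH_deriv : ∀ x ∈ Set.Ioi (0:ℝ),
    HasDerivAt (fun x : ℝ => 2*(x+2)*(x*Real.log x - x + 1) - 3*(x-1)^2)
      (4*((x+1)*Real.log x - 2*(x-1))) x := by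
  intro x hx
  have hx' : (0:ℝ) < x := hx
  have hu : HasDerivAt (fun x : ℝ => x*Real.log x - x + 1)
      ((1 * Real.log x + x * x⁻¹) - 1) x :=
    (((hasDerivAt_id x).mul (Real.hasDerivAt_log hx'.ne')).sub (hasDerivAt_id x)).add_const 1
  have hv : HasDerivAt (fun x : ℝ => 2*(x+2)) 2 x := by
    simpa using ((hasDerivAt_id x).add_const 2).const_mul 2
  have hw : HasDerivAt (fun x : ℝ => 3*(x-1)^2) (3*(2*(x-1))) x := by
    simpa using (((hasDerivAt_id x).sub_const 1).pow 2).const_mul 3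
  have h := (hv.mul hu).sub hw
  have : x * x⁻¹ = 1 := mul_inv_cancel₀ hx'.ne'
  refine h.congr_deriv ?_
  rw [this]; ring

lemma core_ineq {x : ℝ} (hx : 0 < x) :
    3*(x-1)^2 ≤ 2*(x+2)*(x*Real.log x - x + 1) := by
  set h : ℝ → ℝ := fun x => 2*(x+2)*(x*Real.log x - x + 1) - 3*(x-1)^2 with hh
  have h1 : h 1 = 0 := by simp [hh]
  have key : 0 ≤ h x := by
    rcases le_or_gt 1 x with hge | hlt
    · have mono : MonotoneOn h (Set.Ici 1) := by
        apply monotoneOn_of_deriv_nonneg (convex_Ici 1)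
        · exact fun y hy => (auxH_deriv y (Set.mem_Ioi.2 (lt_of_lt_of_le one_pos hy))).continuousAt.continuousWithinAt
        · intro y hy
          rw [interior_Ici] at hy
          exact (auxH_deriv y (Set.mem_Ioi.2 (lt_trans one_pos hy))).differentiableAt.differentiableWithinAt
        · intro y hy
          rw [interior_Ici] at hy
          rw [(auxH_deriv y (Set.mem_Ioi.2 (lt_trans one_pos hy))).deriv]
          have := auxF_nonneg (le_of_lt hy)
          linarith
      have := mono (Set.mem_Ici.2 le_rfl) (Set.mem_Ici.2 hge) hge
      rw [h1] at this; exact this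
    · have anti : AntitoneOn h (Set.Ioc 0 1) := by
        apply antitoneOn_of_deriv_nonpos (convex_Ioc 0 1)
        · exact fun y hy => (auxH_deriv y hy.1).continuousAt.continuousWithinAt
        · intro y hy
          rw [interior_Ioc] at hy
          exact (auxH_deriv y hy.1).differentiableAt.differentiableWithinAt
        · intro y hy
          rw [interior_Ioc] at hy
          rw [(auxH_deriv y hy.1).deriv]
          have := auxF_nonpos hy.1 (le_of_lt hy.2)
          linarith
      have := anti (Set.mem_Ioc.2 ⟨hx, le_of_lt hlt⟩) (Set.mem_Ioc.2 ⟨one_pos, le_rfl⟩) (le_of_lt hlt)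
      rw [h1] at this; exact this
  simp only [hh] at key; linarith

lemma kl_term {p q : ℝ} (hp : 0 < p) (hq : 0 < q) :
    3*(p-q)^2 / (2*(p+2*q)) ≤ p*Real.log (p/q) - p + q := by
  have h := core_ineq (div_pos hp hq)
  set L := Real.log (p/q) with hL
  have key : 3*(p-q)^2 ≤ 2*(p+2*q)*(p*L - p + q) := by
    have hqne : q ≠ 0 := hq.ne'
    have h' := mul_le_mul_of_nonneg_left h (le_of_lt (show (0:ℝ) < q^2 by positivity))
    have e1 : q^2 * (3*(p/q-1)^2) = 3*(p-q)^2 := by field_simp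
    have e2 : q^2 * (2*(p/q+2)*((p/q)*L - p/q + 1)) = 2*(p+2*q)*(p*L - p + q) := by
      field_simp
    rw [e1, e2] at h'
    exact h'
  have hw : (0:ℝ) < 2*(p+2*q) := by linarith
  rw [div_le_iff₀ hw]
  nlinarith

lemma pinskerPol {A : Type*} [Fintype A] (p q : A → ℝ)
    (hp : ∀ a, 0 < p a) (hq : ∀ a, 0 < q a)
    (hp1 : ∑ a, p a = 1) (hq1 : ∑ a, q a = 1) :
    (∑ a, |p a - q a|)^2 / 2 ≤ klPol p q := by
  have hsum3 : ∑ a, (p a + 2*q a) = 3 := by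
    rw [Finset.sum_add_distrib, ← Finset.mul_sum, hp1, hq1]; norm_num
  have CS : (∑ a, |p a - q a|)^2 / 3 ≤ ∑ a, (p a - q a)^2 / (p a + 2*q a) := by
    have := Finset.sq_sum_div_le_sum_sq_div Finset.univ (fun a => |p a - q a|)
      (g := fun a => p a + 2*q a)
      (fun a _ => show 0 < p a + 2*q a by have := hp a; have := hq a; linarith)
    simpa [hsum3, sq_abs] using this
  have step : ∑ a, (3/2) * ((p a - q a)^2/(p a + 2*q a)) ≤ klPol p q := by
    have hkl : klPol p q = ∑ a, (p a * Real.log (p a / q a) - p a + q a) := by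
      simp only [klPol, Finset.sum_add_distrib, Finset.sum_sub_distrib, hp1, hq1]
      ring
    rw [hkl]
    refine Finset.sum_le_sum (fun a _ => ?_)
    have h := kl_term (hp a) (hq a)
    have e : 3*(p a - q a)^2 / (2*(p a + 2*q a)) = (3/2) * ((p a - q a)^2/(p a + 2*q a)) := by
      have : p a + 2*q a ≠ 0 := by have := hp a; have := hq a; positivity
      field_simp
    rw [e] at h
    exact h
  rw [← Finset.mul_sum] at step
  nlinarith [CS, step]

/-- Policy improvement lemma. If ‖Q_k‖_∞ ≤ (1−γ)⁻¹, λ_k ≥ 0, π_{k+1} is given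
by the proximal update π_{k+1} ∝ π_k^{η/(η+λ)} π_0^{λ/(η+λ)} exp(Q_k/(η+λ)), and the
log-ratio satisfies ‖λ log(π_k/π_0) (up to constants in a)‖_∞ ≤ λ α⁴(1−α)^{-4}(1−γ)⁻¹, then
(η+λ)⁻¹⟨Q_k − λ log(π_k/π_0), π* − π_k⟩
  ≤ KL(π*‖π_k) − KL(π*‖π_{k+1}) + (η+λ)^{-2}(1 + λα⁴(1−α)^{-4})²(1−γ)^{-2}. -/
theorem stmt_5 {A : Type*} [Fintype A] [Nonempty A]
    (α γ η lam : ℝ) (hα : 0 < α) (hα1 : α < 1) (hγ : 0 < γ) (hγ1 : γ < 1)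
    (hη : 0 < η) (hlam : 0 ≤ lam)
    (Q : A → ℝ) (hQ : ∀ a, |Q a| ≤ (1 - γ)⁻¹)
    (π0 πk πstar : A → ℝ)
    (hπ0 : (∀ a, 0 < π0 a) ∧ ∑ a, π0 a = 1)
    (hπk : (∀ a, 0 < πk a) ∧ ∑ a, πk a = 1)
    (hπstar : (∀ a, 0 ≤ πstar a) ∧ ∑ a, πstar a = 1)
    (πk1 : A → ℝ)
    (hπk1 : ∀ a, πk1 a =
      πk a ^ (η / (η + lam)) * π0 a ^ (lam / (η + lam)) * Real.exp (Q a / (η + lam)) /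
        ∑ b, πk b ^ (η / (η + lam)) * π0 b ^ (lam / (η + lam)) * Real.exp (Q b / (η + lam)))
    (hlog : ∃ c : ℝ, ∀ a,
      |lam * Real.log (πk a / π0 a) - c| ≤ lam * (α ^ 4 * ((1 - α) ^ 4)⁻¹) * (1 - γ)⁻¹) :
    (η + lam)⁻¹ * ∑ a, (Q a - lam * Real.log (πk a / π0 a)) * (πstar a - πk a)
      ≤ klPol πstar πk - klPol πstar πk1 +
        ((η + lam) ^ 2)⁻¹ * (1 + lam * (α ^ 4 * ((1 - α) ^ 4)⁻¹)) ^ 2 * ((1 - γ) ^ 2)⁻¹ := by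
  obtain ⟨hπ0pos, hπ0sum⟩ := hπ0
  obtain ⟨hπkpos, hπksum⟩ := hπk
  obtain ⟨hπstarpos, hπstarsum⟩ := hπstar
  obtain ⟨c, hc⟩ := hlog
  have hβ : (0:ℝ) < η + lam := by linarith
  have hγ' : (0:ℝ) < (1 - γ)⁻¹ := by
    have : (0:ℝ) < 1 - γ := by linarith
    positivity
  set M : ℝ := α ^ 4 * ((1 - α) ^ 4)⁻¹ with hMdef
  have hM : 0 ≤ M := by
    have h1 : (0:ℝ) < 1 - α := by linarith
    positivity
  set B : ℝ := (1 + lam * M) * (1 - γ)⁻¹ with hBdef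
  have hB : 0 ≤ B := by positivity
  set G : A → ℝ := fun a => Q a - lam * Real.log (πk a / π0 a) + c with hGdef
  have hGB : ∀ a, |G a| ≤ B := by
    intro a
    have h1 : |G a| ≤ |Q a| + |lam * Real.log (πk a / π0 a) - c| := by
      have : G a = Q a - (lam * Real.log (πk a / π0 a) - c) := by simp [hGdef]; ring
      rw [this]
      exact abs_sub _ _
    have h2 := hQ a
    have h3 := hc a
    have : B = (1 - γ)⁻¹ + lam * M * (1 - γ)⁻¹ := by rw [hBdef]; ring
    rw [this]
    linarith
  have hlogdiv : ∀ a, Real.log (πk a / π0 a) = Real.log (πk a) - Real.log (π0 a) :=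
    fun a => Real.log_div (hπkpos a).ne' (hπ0pos a).ne'
  -- pointwise rewriting of the numerator
  have hpt : ∀ a, πk a ^ (η / (η + lam)) * π0 a ^ (lam / (η + lam)) * Real.exp (Q a / (η + lam))
      = (πk a * Real.exp (G a / (η + lam))) * Real.exp (-(c / (η + lam))) := by
    intro a
    have lhs : πk a ^ (η / (η + lam)) * π0 a ^ (lam / (η + lam)) * Real.exp (Q a / (η + lam))
        = Real.exp (Real.log (πk a) * (η / (η + lam)) + Real.log (π0 a) * (lam / (η + lam))
            + Q a / (η + lam)) := by
      rw [Real.rpow_def_of_pos (hπkpos a), Real.rpow_def_of_pos (hπ0pos a),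
        ← Real.exp_add, ← Real.exp_add]
    have rhs : (πk a * Real.exp (G a / (η + lam))) * Real.exp (-(c / (η + lam)))
        = Real.exp (Real.log (πk a) + G a / (η + lam) + (-(c / (η + lam)))) := by
      rw [Real.exp_add, Real.exp_add, Real.exp_log (hπkpos a)]
    rw [lhs, rhs]
    congr 1
    have hGa : G a = Q a - lam * (Real.log (πk a) - Real.log (π0 a)) + c := by
      rw [hGdef]; simp only []; rw [hlogdiv a]
    rw [hGa]
    field_simp
    ring
  -- the normalized form of πk1
  set W : ℝ := ∑ b, πk b * Real.exp (G b / (η + lam)) with hWdef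
  have hW : 0 < W := by
    rw [hWdef]
    apply Finset.sum_pos (fun b _ => mul_pos (hπkpos b) (Real.exp_pos _)) Finset.univ_nonempty
  have hdenom : (∑ b, πk b ^ (η / (η + lam)) * π0 b ^ (lam / (η + lam))
      * Real.exp (Q b / (η + lam))) = W * Real.exp (-(c / (η + lam))) := by
    rw [hWdef, Finset.sum_mul]
    exact Finset.sum_congr rfl (fun b _ => hpt b)
  have hπk1' : ∀ a, πk1 a = πk a * Real.exp (G a / (η + lam)) / W := by
    intro a
    rw [hπk1 a, hpt a, hdenom, mul_div_mul_right _ _ (Real.exp_ne_zero _)]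
  have hπk1pos : ∀ a, 0 < πk1 a := by
    intro a
    rw [hπk1' a]
    exact div_pos (mul_pos (hπkpos a) (Real.exp_pos _)) hW
  have hπk1sum : ∑ a, πk1 a = 1 := by
    simp only [hπk1']
    rw [← Finset.sum_div, ← hWdef, div_self hW.ne']
  -- log ratio formula
  have hlr : ∀ a, Real.log (πk1 a / πk a) = G a / (η + lam) - Real.log W := by
    intro a
    rw [hπk1' a]
    have e : πk a * Real.exp (G a / (η + lam)) / W / πk a
        = Real.exp (G a / (η + lam)) / W := by
      field_simp
      exact div_self (hπkpos a).ne'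
    rw [e, Real.log_div (Real.exp_ne_zero _) hW.ne', Real.log_exp]
  -- zero-sum facts
  have hzero1 : ∑ a, (πstar a - πk a) = 0 := by
    rw [Finset.sum_sub_distrib, hπstarsum, hπksum]; ring
  have hzero2 : ∑ a, (πk1 a - πk a) = 0 := by
    rw [Finset.sum_sub_distrib, hπk1sum, hπksum]; ring
  set d : ℝ := ∑ a, |πk1 a - πk a| with hddef
  have hA : ∑ a, (Q a - lam * Real.log (πk a / π0 a)) * (πstar a - πk a)
      = ∑ a, G a * (πstar a - πk a) := by
    have e : ∀ a : A, (Q a - lam * Real.log (πk a / π0 a)) * (πstar a - πk a)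
        = G a * (πstar a - πk a) - c * (πstar a - πk a) := by
      intro a; simp only [hGdef]; ring
    rw [Finset.sum_congr rfl (fun a _ => e a), Finset.sum_sub_distrib, ← Finset.mul_sum, hzero1]
    ring
  have hmain : (η + lam)⁻¹ * ∑ a, G a * (πstar a - πk a)
      = ∑ a, (πstar a - πk a) * Real.log (πk1 a / πk a) := by
    rw [Finset.mul_sum]
    have e : ∀ a : A, (η + lam)⁻¹ * (G a * (πstar a - πk a))
        = (πstar a - πk a) * Real.log (πk1 a / πk a) + Real.log W * (πstar a - πk a) := by
      intro a; rw [hlr a]; field_simp; ring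
    rw [Finset.sum_congr rfl (fun a _ => e a), Finset.sum_add_distrib, ← Finset.mul_sum, hzero1]
    ring
  have hdecomp : ∑ a, (πstar a - πk a) * Real.log (πk1 a / πk a)
      = (∑ a, πstar a * Real.log (πk1 a / πk a)) - klPol πk1 πk
        + ∑ a, (πk1 a - πk a) * Real.log (πk1 a / πk a) := by
    have e : ∀ a : A, (πstar a - πk a) * Real.log (πk1 a / πk a)
        = πstar a * Real.log (πk1 a / πk a) - πk1 a * Real.log (πk1 a / πk a)
          + (πk1 a - πk a) * Real.log (πk1 a / πk a) := by
      intro a; ring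
    rw [Finset.sum_congr rfl (fun a _ => e a), Finset.sum_add_distrib, Finset.sum_sub_distrib]
    rfl
  have hT1 : ∑ a, πstar a * Real.log (πk1 a / πk a) = klPol πstar πk - klPol πstar πk1 := by
    simp only [klPol, ← Finset.sum_sub_distrib]
    refine Finset.sum_congr rfl (fun a _ => ?_)
    rcases eq_or_lt_of_le (hπstarpos a) with h0 | hpos
    · rw [← h0]; ring
    · rw [Real.log_div (hπk1pos a).ne' (hπkpos a).ne',
        Real.log_div hpos.ne' (hπkpos a).ne', Real.log_div hpos.ne' (hπk1pos a).ne']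
      ring
  have hT2 : ∑ a, (πk1 a - πk a) * Real.log (πk1 a / πk a) ≤ B / (η + lam) * d := by
    have e : ∀ a : A, (πk1 a - πk a) * Real.log (πk1 a / πk a)
        = (πk1 a - πk a) * (G a / (η + lam)) - Real.log W * (πk1 a - πk a) := by
      intro a; rw [hlr a]; ring
    rw [Finset.sum_congr rfl (fun a _ => e a), Finset.sum_sub_distrib, ← Finset.mul_sum, hzero2,
      mul_zero, sub_zero]
    have bound : ∀ a : A, (πk1 a - πk a) * (G a / (η + lam))
        ≤ |πk1 a - πk a| * (B / (η + lam)) := by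
      intro a
      calc (πk1 a - πk a) * (G a / (η + lam))
          ≤ |(πk1 a - πk a) * (G a / (η + lam))| := le_abs_self _
        _ = |πk1 a - πk a| * (|G a| / (η + lam)) := by
            rw [abs_mul, abs_div, abs_of_pos hβ]
        _ ≤ |πk1 a - πk a| * (B / (η + lam)) := by
            gcongr
            exact hGB a
    calc ∑ a, (πk1 a - πk a) * (G a / (η + lam))
        ≤ ∑ a, |πk1 a - πk a| * (B / (η + lam)) := Finset.sum_le_sum (fun a _ => bound a)
      _ = B / (η + lam) * d := by rw [hddef, ← Finset.sum_mul]; ring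
  have hp := pinskerPol πk1 πk hπk1pos hπkpos hπk1sum hπksum
  rw [← hddef] at hp
  have hdnn : 0 ≤ d := Finset.sum_nonneg fun a _ => abs_nonneg _
  have hfinal : B / (η + lam) * d - klPol πk1 πk ≤ (B / (η + lam))^2 / 2 := by
    nlinarith [hp, sq_nonneg (d - B / (η + lam))]
  have hext : (B / (η + lam))^2 / 2 ≤ ((η + lam)^2)⁻¹ * (1 + lam * M)^2 * ((1 - γ)^2)⁻¹ := by
    have heq : ((η + lam)^2)⁻¹ * (1 + lam * M)^2 * ((1 - γ)^2)⁻¹ = (B / (η + lam))^2 := by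
      rw [hBdef, div_pow, mul_pow, inv_pow]
      ring
    rw [heq]
    linarith [sq_nonneg (B / (η + lam))]
  rw [hA, hmain, hdecomp, hT1]
  linarith [hT2, hfinal, hext]
end

section
/- The suboptimality V^{π*}(s_0) − V^{π̂}(s_0) decomposes exactly as −Σ_t γ^t E_{π̂}[ι(s_t,a_t)|s_0] + Σ_t γ^t E_{π*}[ι(s_t,a_t)|s_0] + Σ_t γ^t E_{π*}[⟨Q̂(s_t,·), π*(·|s_t) − π̂(·|s_t)⟩|s_0], where ι(s,a) = BQ̂(s,a) − B̂Q̂(s,a) is the epistemic error, and V^π̂ is computed from Q̂ via V̂(s) = ⟨Q̂(s,·), π̂(·|s)⟩ with Q̂ satisfying Q̂ = B̂Q̂. -/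
open Finset

/-- A (stationary, stochastic) policy on a finite MDP. -/
def IsPolicy {S A : Type*} [Fintype A] (π : S → A → ℝ) : Prop :=
  (∀ s a, 0 ≤ π s a) ∧ ∀ s, ∑ a, π s a = 1

/-- A Markov transition kernel on a finite MDP. -/
def IsKernel {S A : Type*} [Fintype S] (P : S → A → S → ℝ) : Prop :=
  (∀ s a s', 0 ≤ P s a s') ∧ ∀ s a, ∑ s', P s a s' = 1

/-- The state distribution at time t of the Markov chain started at s₀ and following
policy π in the MDP with transition kernel P. -/
noncomputable def distAt {S A : Type*} [Fintype S] [Fintype A] [DecidableEq S]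
    (P : S → A → S → ℝ) (π : S → A → ℝ) (s0 : S) : ℕ → S → ℝ
  | 0 => fun s => if s = s0 then 1 else 0
  | t + 1 => fun s' => ∑ s, ∑ a, distAt P π s0 t s * π s a * P s a s'

/-- The expectation E_π[f(s_t, a_t) | s₀] along trajectories of policy π. -/
noncomputable def expAt {S A : Type*} [Fintype S] [Fintype A] [DecidableEq S]
    (P : S → A → S → ℝ) (π : S → A → ℝ) (s0 : S) (t : ℕ) (f : S → A → ℝ) : ℝ :=
  ∑ s, ∑ a, distAt P π s0 t s * π s a * f s a

/-- The λ-regularized value V_λ^π(s₀) = E_π[Σ_t γ^t (r(s_t,a_t) − λ log(π(·|s_t)/π₀(·|s_t)))]. -/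
noncomputable def VReg {S A : Type*} [Fintype S] [Fintype A] [DecidableEq S]
    (P : S → A → S → ℝ) (r : S → A → ℝ) (γ lam : ℝ) (π0 π : S → A → ℝ) (s0 : S) : ℝ :=
  ∑' t : ℕ, γ ^ t * expAt P π s0 t (fun s a => r s a - lam * Real.log (π s a / π0 s a))

/-- The unregularized discounted value V^π(s₀) = Σ_t γ^t E_π[r(s_t,a_t) | s₀]. -/
noncomputable def Vval {S A : Type*} [Fintype S] [Fintype A] [DecidableEq S]
    (P : S → A → S → ℝ) (r : S → A → ℝ) (γ : ℝ) (π : S → A → ℝ) (s0 : S) : ℝ :=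
  ∑' t : ℕ, γ ^ t * expAt P π s0 t r
section Helpers

variable {S A : Type*} [Fintype S] [Fintype A] [DecidableEq S]
variable (P : S → A → S → ℝ) (π : S → A → ℝ) (s0 : S)

lemma distAt_nonneg (hP : IsKernel P) (hπ : IsPolicy π) :
    ∀ t s, 0 ≤ distAt P π s0 t s
  | 0, s => by simp only [distAt]; split <;> norm_num
  | (t+1), s' => by
      simp only [distAt]
      refine Finset.sum_nonneg fun s _ => Finset.sum_nonneg fun a _ => ?_
      exact mul_nonneg (mul_nonneg (distAt_nonneg hP hπ t s) (hπ.1 s a)) (hP.1 s a s')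

lemma distAt_sum_one (hP : IsKernel P) (hπ : IsPolicy π) :
    ∀ t, ∑ s, distAt P π s0 t s = 1
  | 0 => by simp [distAt]
  | (t+1) => by
      simp only [distAt]
      rw [Finset.sum_comm]
      have : ∀ s ∈ Finset.univ (α := S),
          (∑ s', ∑ a, distAt P π s0 t s * π s a * P s a s') = distAt P π s0 t s := by
        intro s _
        rw [Finset.sum_comm]
        have : ∀ a ∈ Finset.univ (α := A),
            (∑ s', distAt P π s0 t s * π s a * P s a s') = distAt P π s0 t s * π s a := by
          intro a _
          rw [← Finset.mul_sum, hP.2 s a, mul_one]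
        rw [Finset.sum_congr rfl this, ← Finset.mul_sum, hπ.2 s, mul_one]
      rw [Finset.sum_congr rfl this, distAt_sum_one hP hπ t]

/-- expAt is bounded by any uniform bound on f. -/
lemma abs_expAt_le (hP : IsKernel P) (hπ : IsPolicy π) (t : ℕ) (f : S → A → ℝ)
    {C : ℝ} (hC : ∀ s a, |f s a| ≤ C) :
    |expAt P π s0 t f| ≤ C := by
  have hd := distAt_nonneg P π s0 hP hπ t
  calc |expAt P π s0 t f| ≤ ∑ s, ∑ a, distAt P π s0 t s * π s a * |f s a| := by
        refine (Finset.abs_sum_le_sum_abs _ _).trans ?_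
        refine Finset.sum_le_sum fun s _ => ?_
        refine (Finset.abs_sum_le_sum_abs _ _).trans ?_
        refine Finset.sum_le_sum fun a _ => ?_
        rw [abs_mul, abs_of_nonneg (mul_nonneg (hd s) (hπ.1 s a))]
    _ ≤ ∑ s, ∑ a, distAt P π s0 t s * π s a * C := by
        refine Finset.sum_le_sum fun s _ => Finset.sum_le_sum fun a _ => ?_
        exact mul_le_mul_of_nonneg_left (hC s a) (mul_nonneg (hd s) (hπ.1 s a))
    _ = C := by
        simp only [← Finset.sum_mul, ← Finset.mul_sum]
        have : ∀ s ∈ Finset.univ (α := S),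
            distAt P π s0 t s * ∑ a, π s a = distAt P π s0 t s := by
          intro s _; rw [hπ.2 s, mul_one]
        rw [Finset.sum_congr rfl this, distAt_sum_one P π s0 hP hπ t, one_mul]

lemma summable_expAt (hP : IsKernel P) (hπ : IsPolicy π) {γ : ℝ} (hγ : 0 ≤ γ) (hγ1 : γ < 1)
    (f : S → A → ℝ) : Summable (fun t => γ ^ t * expAt P π s0 t f) := by
  set C : ℝ := ∑ s, ∑ a, |f s a| with hCdef
  have hC : ∀ s a, |f s a| ≤ C := by
    intro s a
    calc |f s a| ≤ ∑ a', |f s a'| := Finset.single_le_sum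
          (f := fun a' => |f s a'|) (fun a' _ => abs_nonneg _) (Finset.mem_univ a)
      _ ≤ C := Finset.single_le_sum
          (f := fun s => ∑ a', |f s a'|)
          (fun s' _ => Finset.sum_nonneg fun a' _ => abs_nonneg _) (Finset.mem_univ s)
  refine Summable.of_norm_bounded
    ((summable_geometric_of_lt_one hγ hγ1).mul_left C) fun t => ?_
  rw [Real.norm_eq_abs, abs_mul, abs_pow, abs_of_nonneg hγ, mul_comm]
  exact mul_le_mul_of_nonneg_right (abs_expAt_le P π s0 hP hπ t f hC) (pow_nonneg hγ t)

/-- Expectation of a state-only function equals the distAt average. -/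
lemma expAt_state (hπ : IsPolicy π) (t : ℕ) (v : S → ℝ) :
    expAt P π s0 t (fun s _ => v s) = ∑ s, distAt P π s0 t s * v s := by
  unfold expAt
  refine Finset.sum_congr rfl fun s _ => ?_
  rw [← Finset.sum_mul]
  rw [show (∑ a, distAt P π s0 t s * π s a) = distAt P π s0 t s by
    rw [← Finset.mul_sum, hπ.2 s, mul_one]]

/-- One-step lemma: expectation of the next-state average of v. -/
lemma expAt_step (t : ℕ) (v : S → ℝ) :
    expAt P π s0 t (fun s a => ∑ s', P s a s' * v s') =
      ∑ s', distAt P π s0 (t+1) s' * v s' := by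
  unfold expAt
  calc ∑ s, ∑ a, distAt P π s0 t s * π s a * ∑ s', P s a s' * v s'
      = ∑ s, ∑ s', ∑ a, distAt P π s0 t s * π s a * P s a s' * v s' := by
        refine Finset.sum_congr rfl fun s _ => ?_
        rw [Finset.sum_comm]
        refine Finset.sum_congr rfl fun a _ => ?_
        rw [Finset.mul_sum]
        exact Finset.sum_congr rfl fun s' _ => by ring
    _ = ∑ s', ∑ s, ∑ a, distAt P π s0 t s * π s a * P s a s' * v s' := Finset.sum_comm
    _ = ∑ s', distAt P π s0 (t+1) s' * v s' := by
        refine Finset.sum_congr rfl fun s' _ => ?_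
        simp only [distAt, Finset.sum_mul]

lemma expAt_add (t : ℕ) (f g : S → A → ℝ) :
    expAt P π s0 t (fun s a => f s a + g s a) = expAt P π s0 t f + expAt P π s0 t g := by
  unfold expAt
  simp [Finset.sum_add_distrib, mul_add]

lemma expAt_sub (t : ℕ) (f g : S → A → ℝ) :
    expAt P π s0 t (fun s a => f s a - g s a) = expAt P π s0 t f - expAt P π s0 t g := by
  unfold expAt
  simp [Finset.sum_sub_distrib, mul_sub]

lemma expAt_smul (t : ℕ) (c : ℝ) (f : S → A → ℝ) :
    expAt P π s0 t (fun s a => c * f s a) = c * expAt P π s0 t f := by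
  unfold expAt
  simp only [Finset.mul_sum]
  refine Finset.sum_congr rfl fun s _ => Finset.sum_congr rfl fun a _ => ?_
  ring

end Helpers
set_option maxHeartbeats 1000000
lemma expAt_factor {S A : Type*} [Fintype S] [Fintype A] [DecidableEq S]
    (P : S → A → S → ℝ) (π : S → A → ℝ) (s0 : S) (t : ℕ) (f : S → A → ℝ) :
    expAt P π s0 t f = ∑ s, distAt P π s0 t s * ∑ a, π s a * f s a := by
  unfold expAt
  refine Finset.sum_congr rfl fun s _ => ?_
  rw [Finset.mul_sum]
  exact Finset.sum_congr rfl fun a _ => by ring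

lemma tsum_succ_sub {G : ℕ → ℝ} (hG : Summable G) :
    ∑' t : ℕ, (G (t+1) - G t) = -G 0 := by
  rw [Summable.tsum_sub ((summable_nat_add_iff 1).mpr hG) hG, Summable.tsum_eq_zero_add hG]
  ring


lemma key_decomp {S A : Type*} [Fintype S] [Fintype A] [DecidableEq S]
    (P : S → A → S → ℝ) (π : S → A → ℝ) (s0 : S)
    (hP : IsKernel P) (hπ : IsPolicy π) {γ : ℝ} (hγ : 0 ≤ γ) (hγ1 : γ < 1)
    (r Qhat ι : S → A → ℝ) (v : S → ℝ)
    (hι : ∀ s a, ι s a = r s a + γ * (∑ s', P s a s' * v s') - Qhat s a) :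
    ∑' t : ℕ, γ ^ t * expAt P π s0 t ι
      = (∑' t : ℕ, γ ^ t * expAt P π s0 t r) - v s0
        + ∑' t : ℕ, (γ ^ t * (∑ s, distAt P π s0 t s * v s)
            - γ ^ t * expAt P π s0 t Qhat) := by
  have hEι : ∀ t, expAt P π s0 t ι
      = expAt P π s0 t r + γ * (∑ s', distAt P π s0 (t+1) s' * v s')
        - expAt P π s0 t Qhat := by
    intro t
    rw [← expAt_step P π s0 t v]
    unfold expAt
    have h : ∀ s ∈ Finset.univ (α := S), ∀ a ∈ Finset.univ (α := A),
        distAt P π s0 t s * π s a * ι s a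
          = distAt P π s0 t s * π s a * r s a
            + γ * (distAt P π s0 t s * π s a * ((fun s a => ∑ s', P s a s' * v s') s a))
            - distAt P π s0 t s * π s a * Qhat s a := by
      intro s _ a _
      simp only
      rw [hι]; ring
    calc ∑ s, ∑ a, distAt P π s0 t s * π s a * ι s a
        = ∑ s, ∑ a, (distAt P π s0 t s * π s a * r s a
            + γ * (distAt P π s0 t s * π s a * ((fun s a => ∑ s', P s a s' * v s') s a))
            - distAt P π s0 t s * π s a * Qhat s a) :=
          Finset.sum_congr rfl fun s hs => Finset.sum_congr rfl fun a ha => h s hs a ha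
      _ = _ := by
          simp only [Finset.sum_sub_distrib, Finset.sum_add_distrib, ← Finset.mul_sum]
  have hSf := summable_expAt P π s0 hP hπ hγ hγ1 r
  have hSq := summable_expAt P π s0 hP hπ hγ hγ1 Qhat
  have hSg : Summable (fun t => γ ^ t * (∑ s, distAt P π s0 t s * v s)) := by
    have := summable_expAt P π s0 hP hπ hγ hγ1 (fun s _ => v s)
    refine this.congr fun t => ?_
    rw [expAt_state P π s0 hπ]
  have hSg1 : Summable (fun t => γ ^ (t+1) * (∑ s, distAt P π s0 (t+1) s * v s)) :=
    (summable_nat_add_iff 1).mpr hSg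
  calc ∑' t : ℕ, γ ^ t * expAt P π s0 t ι
      = ∑' t : ℕ, (γ ^ t * expAt P π s0 t r
          + (γ ^ (t+1) * (∑ s, distAt P π s0 (t+1) s * v s)
              - γ ^ t * (∑ s, distAt P π s0 t s * v s))
          + (γ ^ t * (∑ s, distAt P π s0 t s * v s)
              - γ ^ t * expAt P π s0 t Qhat)) :=
        tsum_congr fun t => by rw [hEι t]; ring
    _ = (∑' t : ℕ, γ ^ t * expAt P π s0 t r)
          + (∑' t : ℕ, (γ ^ (t+1) * (∑ s, distAt P π s0 (t+1) s * v s)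
              - γ ^ t * (∑ s, distAt P π s0 t s * v s)))
          + ∑' t : ℕ, (γ ^ t * (∑ s, distAt P π s0 t s * v s)
              - γ ^ t * expAt P π s0 t Qhat) := by
        rw [Summable.tsum_add (hSf.add (hSg1.sub hSg)) (hSg.sub hSq), Summable.tsum_add hSf (hSg1.sub hSg)]
    _ = _ := by
        rw [tsum_succ_sub hSg]
        have h0 : γ ^ 0 * (∑ s, distAt P π s0 0 s * v s) = v s0 := by
          simp [distAt]
        rw [h0]; ring


/-- The suboptimality V^{π*}(s₀) − V^{π̂}(s₀) decomposes exactly as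
−Σ_t γ^t E_{π̂}[ι(s_t,a_t)|s₀] + Σ_t γ^t E_{π*}[ι(s_t,a_t)|s₀]
  + Σ_t γ^t E_{π*}[⟨Q̂(s_t,·), π*(·|s_t) − π̂(·|s_t)⟩|s₀],
where ι = BQ̂ − B̂Q̂ is the epistemic error, B̂Q̂ fixed by Q̂ = B̂Q̂, the true Bellman
operator is BQ̂(s,a) = r(s,a) + γ E_{s'∼P(·|s,a)}[V̂(s')], and V̂(s) = ⟨Q̂(s,·), π̂(·|s)⟩. -/
theorem stmt_16 {S A : Type*} [Fintype S] [Fintype A] [DecidableEq S] [Nonempty A]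
    (P : S → A → S → ℝ) (hP : IsKernel P)
    (r : S → A → ℝ) (γ : ℝ) (hγ : 0 < γ) (hγ1 : γ < 1) (s0 : S)
    (πstar πhat : S → A → ℝ) (hπstar : IsPolicy πstar) (hπhat : IsPolicy πhat)
    -- π* is the optimal policy:
    (hopt : ∀ π : S → A → ℝ, IsPolicy π → Vval P r γ π s0 ≤ Vval P r γ πstar s0)
    (Qhat hatBQ : S → A → ℝ)
    -- Q̂ is the fixed point of the empirical Bellman operator, Q̂ = B̂Q̂:
    (hfix : ∀ s a, Qhat s a = hatBQ s a)
    -- the epistemic error ι = BQ̂ − B̂Q̂, with V̂(s) = ⟨Q̂(s,·), π̂(·|s)⟩: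
    (ι : S → A → ℝ)
    (hι : ∀ s a, ι s a =
      (r s a + γ * ∑ s', P s a s' * ∑ a', πhat s' a' * Qhat s' a') - hatBQ s a) :
    Vval P r γ πstar s0 - Vval P r γ πhat s0 =
      -(∑' t : ℕ, γ ^ t * expAt P πhat s0 t ι) +
        (∑' t : ℕ, γ ^ t * expAt P πstar s0 t ι) +
        ∑' t : ℕ, γ ^ t * ∑ s, distAt P πstar s0 t s *
          ∑ a, Qhat s a * (πstar s a - πhat s a) := by

  have hγ0 : (0:ℝ) ≤ γ := hγ.le
  set v : S → ℝ := fun s => ∑ a, πhat s a * Qhat s a with hv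
  have hι' : ∀ s a, ι s a = r s a + γ * (∑ s', P s a s' * v s') - Qhat s a := by
    intro s a
    rw [hι s a, hfix s a]
  -- π̂ part
  have hA := key_decomp P πhat s0 hP hπhat hγ0 hγ1 r Qhat ι v hι'
  have hA0 : (∑' t : ℕ, (γ ^ t * (∑ s, distAt P πhat s0 t s * v s)
      - γ ^ t * expAt P πhat s0 t Qhat)) = 0 := by
    have : ∀ t : ℕ, γ ^ t * (∑ s, distAt P πhat s0 t s * v s)
        - γ ^ t * expAt P πhat s0 t Qhat = 0 := by
      intro t
      rw [expAt_factor P πhat s0 t Qhat]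
      simp [hv]
    rw [tsum_congr this, tsum_zero]
  -- π* part
  have hB := key_decomp P πstar s0 hP hπstar hγ0 hγ1 r Qhat ι v hι'
  have hB0 : (∑' t : ℕ, (γ ^ t * (∑ s, distAt P πstar s0 t s * v s)
      - γ ^ t * expAt P πstar s0 t Qhat))
      = -(∑' t : ℕ, γ ^ t * ∑ s, distAt P πstar s0 t s *
          ∑ a, Qhat s a * (πstar s a - πhat s a)) := by
    rw [← tsum_neg]
    refine tsum_congr fun t => ?_
    rw [expAt_factor P πstar s0 t Qhat]
    have hw : ∀ s, (∑ a, Qhat s a * (πstar s a - πhat s a))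
        = (∑ a, πstar s a * Qhat s a) - v s := by
      intro s
      rw [hv]
      simp only
      rw [← Finset.sum_sub_distrib]
      exact Finset.sum_congr rfl fun a _ => by ring
    have hss : (∑ s, distAt P πstar s0 t s * ∑ a, Qhat s a * (πstar s a - πhat s a))
        = (∑ s, distAt P πstar s0 t s * ∑ a, πstar s a * Qhat s a)
          - ∑ s, distAt P πstar s0 t s * v s := by
      rw [← Finset.sum_sub_distrib]
      refine Finset.sum_congr rfl fun s _ => ?_
      rw [← mul_sub, hw s]
    rw [hss]
    ring
  rw [hA0] at hA
  rw [hB0] at hB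
  simp only [Vval]
  linarith [hA, hB]
end
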